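/- arXiv:1812.07072 — 2 statements merged into one kernel-verified Lean document; each statement's English description precedes it below -/
import Mathlib

section
/- Let n, N ≥ 1 and b ≥ 2 be integers with nN = b^n, and let B be the set of integers a with 0 ≤ a < 2nN such that at least one of the n least significant digits of a in base b equals 0. Then the (−N,N)-linear graph on B is (n,(−N,N))-universal, and |B| = 2(b^n − (b−1)^n), which is at most 2n·b^{n−1}. In particular there exists an (n,(−N,N))-universal graph of size 2(nN − ((nN)^{1/n} − 1)^n) ≤ 2n(nN)^{1−1/n}. -/
open Filter


/-- A finite path: a list of consecutive edges, all belonging to `E`,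
starting at `u` (when nonempty). -/
def FinPath {V : Type} (E : Set (V × ℤ × V)) (u : V) (p : List (V × ℤ × V)) : Prop :=
  (∀ e ∈ p, e ∈ E) ∧ List.Chain' (fun e e' => e.2.2 = e'.1) p ∧
    ∀ h : p ≠ [], (p.head h).1 = u

/-- The last vertex of a finite path starting at `u` (which is `u` itself for the empty path). -/
def lastV {V : Type} (u : V) (p : List (V × ℤ × V)) : V :=
  (p.getLastD (u, 0, u)).2.2

/-- An infinite path: a sequence of consecutive edges, all belonging to `E`. -/
def InfPath {V : Type} (E : Set (V × ℤ × V)) (π : ℕ → V × ℤ × V) : Prop :=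
  (∀ i, π i ∈ E) ∧ ∀ i, (π i).2.2 = (π (i + 1)).1

/-- The total weight of a finite path. -/
def pathWeight {V : Type} (p : List (V × ℤ × V)) : ℤ :=
  (p.map fun e => e.2.1).sum

/-- A sequence of integer weights satisfies mean payoff if the liminf of the
averages of its prefixes is nonnegative. -/
def MeanPayoffSeq (w : ℕ → ℤ) : Prop :=
  0 ≤ Filter.atTop.liminf (fun ℓ : ℕ => (∑ i ∈ Finset.range ℓ, (w i : ℝ)) / (ℓ : ℝ))

/-- A graph (given by its edge set) satisfies mean payoff if all its infinite paths do. -/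
def SatMP {V : Type} (E : Set (V × ℤ × V)) : Prop :=
  ∀ π : ℕ → V × ℤ × V, InfPath E π → MeanPayoffSeq (fun i => (π i).2.1)

/-- A cycle: a nonempty finite path whose first and last vertices coincide. -/
def IsCycle {V : Type} (E : Set (V × ℤ × V)) (p : List (V × ℤ × V)) : Prop :=
  p ≠ [] ∧ ∃ v, FinPath E v p ∧ lastV v p = v

/-- A `W`-graph: a finite set of vertices, edges labelled by weights in `W`,
and an initial vertex from which every vertex is reachable. -/
structure WGraph (W : Finset ℤ) where
  V : Type
  fin : Fintype V
  E : Set (V × ℤ × V)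
  init : V
  wt : ∀ e ∈ E, e.2.1 ∈ W
  reach : ∀ v : V, ∃ p, FinPath E init p ∧ lastV init p = v

attribute [instance] WGraph.fin

/-- The `W`-linear graph on a set `A ⊆ ℤ`: vertices are the elements of `A`, and
for `v, v' ∈ A` and `w ∈ W` there is an edge `(v, w, v')` whenever `v' - v ≤ w`. -/
def LinE (W : Finset ℤ) (A : Set ℤ) : Set (ℤ × ℤ × ℤ) :=
  {e | e.1 ∈ A ∧ e.2.2 ∈ A ∧ e.2.1 ∈ W ∧ e.2.2 - e.1 ≤ e.2.1}

/-- A homomorphism of labelled graphs (no requirement on initial vertices). -/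
def IsHom {V U : Type} (E : Set (V × ℤ × V)) (E' : Set (U × ℤ × U)) (φ : V → U) : Prop :=
  ∀ e ∈ E, (φ e.1, e.2.1, φ e.2.2) ∈ E'

/-- A graph (given by its edge set) is `(n,W)`-universal if it satisfies mean payoff and
every `(n,W)`-graph satisfying mean payoff admits a homomorphism into it. -/
def Universal (n : ℕ) (W : Finset ℤ) {U : Type} (EU : Set (U × ℤ × U)) : Prop :=
  SatMP EU ∧
    ∀ G : WGraph W, Fintype.card G.V ≤ n → SatMP G.E → ∃ φ : G.V → U, IsHom G.E EU φ

/-- The set of weights `(-N, N)`: integers `w` with `-N < w < N`. -/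
noncomputable def Wball (N : ℕ) : Finset ℤ := Finset.Ioo (-(N : ℤ)) (N : ℤ)

/-- `φ` is the distance function from the initial vertex: `φ v` is the minimum total
weight of a finite path from the initial vertex to `v`. -/
def IsDistFrom {W : Finset ℤ} (G : WGraph W) (φ : G.V → ℤ) : Prop :=
  ∀ v : G.V,
    (∃ p, FinPath G.E G.init p ∧ lastV G.init p = v ∧ pathWeight p = φ v) ∧
    ∀ p, FinPath G.E G.init p → lastV G.init p = v → φ v ≤ pathWeight p

/-- The set `B` of integers `a` with `0 ≤ a < 2nN` having at least one zero digit
among the `n` least significant digits of `a` in base `b`. -/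
def digitZeroSet (n N b : ℕ) : Set ℤ :=
  {a | 0 ≤ a ∧ a < 2 * (n : ℤ) * (N : ℤ) ∧ ∃ i < n, (a / (b : ℤ) ^ i) % (b : ℤ) = 0}

/-- Key combinatorial lemma: any list of at most `k` naturals can be simultaneously
translated by some `c < b^k` so that each element has a zero digit among its `k`
least significant base-`b` digits. -/
theorem ulem (b : ℕ) (hb : 2 ≤ b) : ∀ (k : ℕ) (l : List ℕ), l.length ≤ k →
    ∃ c < b ^ k, ∀ a ∈ l, ∃ i < k, ((a + c) / b ^ i) % b = 0 := by
  intro k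
  induction k with
  | zero =>
    intro l hl
    have : l = [] := List.length_eq_zero_iff.mp (Nat.le_zero.mp hl)
    subst this
    exact ⟨0, by positivity, by simp⟩
  | succ k ih =>
    intro l hl
    match l with
    | [] => exact ⟨0, by positivity, by simp⟩
    | a₀ :: t =>
      set r := a₀ % b with hr
      set c₀ := if r = 0 then 0 else b - r with hc₀
      have hrb : r < b := Nat.mod_lt _ (by omega)
      have hc₀b : c₀ < b := by rw [hc₀]; split <;> omega
      have h₀ : (a₀ + c₀) % b = 0 := by
        rcases eq_or_ne r 0 with h | h
        · simp only [hc₀, h, if_pos, Nat.add_zero]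
          omega
        · have hd := Nat.div_add_mod a₀ b
          have hm : b * (a₀ / b + 1) = b * (a₀ / b) + b := by ring
          have : a₀ + c₀ = b * (a₀ / b + 1) := by
            rw [hc₀, if_neg h, hm]; omega
          rw [this, Nat.mul_mod_right]
      obtain ⟨c', hc', hprop⟩ := ih (t.map (fun a => (a + c₀) / b)) (by simpa using Nat.le_of_succ_le_succ hl)
      refine ⟨c₀ + b * c', ?_, ?_⟩
      · have h1 : b * c' + b ≤ b * b ^ k := by
          calc b * c' + b = b * (c' + 1) := by ring
          _ ≤ b * b ^ k := Nat.mul_le_mul_left _ (by omega)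
        have : b ^ (k+1) = b * b ^ k := by rw [pow_succ']
        omega
      · intro a ha
        rcases List.mem_cons.mp ha with h | h
        · subst h
          refine ⟨0, Nat.succ_pos _, ?_⟩
          have : a + (c₀ + b * c') = (a + c₀) + b * c' := by ring
          rw [pow_zero, Nat.div_one, this, Nat.add_mul_mod_self_left, h₀]
        · obtain ⟨i, hik, hi⟩ := hprop ((a + c₀) / b) (List.mem_map_of_mem h)
          refine ⟨i + 1, by omega, ?_⟩
          have e1 : (a + (c₀ + b * c')) / b ^ (i+1) = ((a + c₀) / b + c') / b ^ i := by
            have : a + (c₀ + b * c') = (a + c₀) + b * c' := by ring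
            rw [this, pow_succ', ← Nat.div_div_eq_div_mul,
              Nat.add_mul_div_left _ _ (by omega : 0 < b)]
          rw [e1]; exact hi


abbrev Pd (b n a : ℕ) : Prop := ∃ i < n, (a / b ^ i) % b = 0

lemma pd_dec (b : ℕ) (hb : 2 ≤ b) (n q r : ℕ) (hr : r < b) :
    Pd b (n+1) (q * b + r) ↔ (r = 0 ∨ Pd b n q) := by
  constructor
  · rintro ⟨i, hi, hdig⟩
    match i with
    | 0 =>
      left
      rwa [pow_zero, Nat.div_one, mul_comm q b, Nat.mul_add_mod, Nat.mod_eq_of_lt hr] at hdig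
    | (j+1) =>
      right
      refine ⟨j, by omega, ?_⟩
      rwa [pow_succ', ← Nat.div_div_eq_div_mul, mul_comm q b,
        Nat.mul_add_div (by omega), Nat.div_eq_of_lt hr, Nat.add_zero] at hdig
  · rintro (h | ⟨j, hj, hdig⟩)
    · exact ⟨0, by omega, by rw [pow_zero, Nat.div_one, mul_comm q b, Nat.mul_add_mod, h, Nat.zero_mod]⟩
    · refine ⟨j + 1, by omega, ?_⟩
      rwa [pow_succ', ← Nat.div_div_eq_div_mul, mul_comm q b,
        Nat.mul_add_div (by omega), Nat.div_eq_of_lt hr, Nat.add_zero]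

lemma pd_shift (b : ℕ) (hb : 2 ≤ b) (n a : ℕ) :
    Pd b n (b ^ n + a) ↔ Pd b n a := by
  have key : ∀ i < n, (b ^ n + a) / b ^ i % b = a / b ^ i % b := by
    intro i hi
    have h1 : b ^ n = b ^ i * b ^ (n - i) := by rw [← pow_add]; congr 1; omega
    have h2 : (b ^ i * b ^ (n - i) + a) / b ^ i = b ^ (n - i) + a / b ^ i := by
      rw [Nat.mul_add_div (by positivity)]
    have h3 : b ^ (n - i) = b * b ^ (n - i - 1) := by
      rw [← pow_succ']; congr 1; omega
    rw [h1, h2, h3, Nat.mul_add_mod]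
  constructor <;> rintro ⟨i, hi, hdig⟩ <;> exact ⟨i, hi, by rw [key i hi] at *; omega⟩

lemma count_pow (b : ℕ) (hb : 2 ≤ b) :
    ∀ n, ((Finset.range (b ^ n)).filter (fun a => Pd b n a)).card + (b-1) ^ n = b ^ n := by
  intro n
  induction n with
  | zero =>
    rw [pow_zero]
    simp [Pd]
  | succ n ih =>
    have reindex : ∀ g : ℕ → ℕ, ∑ a ∈ Finset.range (b ^ n * b), g a
        = ∑ p ∈ Finset.range (b ^ n) ×ˢ Finset.range b, g (p.1 * b + p.2) := by
      intro g
      apply Finset.sum_nbij' (i := fun a => (a / b, a % b)) (j := fun p => p.1 * b + p.2)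
      · intro a ha
        simp only [Finset.mem_range] at ha
        simp only [Finset.mem_product, Finset.mem_range]
        constructor
        · rw [mul_comm] at ha
          exact Nat.div_lt_of_lt_mul ha
        · exact Nat.mod_lt _ (by omega)
      · intro p hp
        simp only [Finset.mem_product, Finset.mem_range] at hp
        simp only [Finset.mem_range]
        have : p.1 * b + p.2 < (p.1 + 1) * b := by
          have := hp.2; nlinarith
        calc p.1 * b + p.2 < (p.1 + 1) * b := this
        _ ≤ b ^ n * b := Nat.mul_le_mul_right _ (by omega)
      · intro a ha
        show a / b * b + a % b = a
        rw [mul_comm]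
        exact Nat.div_add_mod a b
      · intro p hp
        simp only [Finset.mem_product, Finset.mem_range] at hp
        have h1 : (p.1 * b + p.2) / b = p.1 := by
          rw [mul_comm p.1 b, Nat.mul_add_div (by omega), Nat.div_eq_of_lt hp.2, Nat.add_zero]
        have h2 : (p.1 * b + p.2) % b = p.2 := by
          rw [mul_comm p.1 b, Nat.mul_add_mod, Nat.mod_eq_of_lt hp.2]
        rw [h1, h2]
      · intro a ha
        have : a / b * b + a % b = a := by rw [mul_comm]; exact Nat.div_add_mod a b
        show g a = g (a / b * b + a % b)
        rw [this]
    have key : ((Finset.range (b ^ (n+1))).filter (fun a => Pd b (n+1) a)).card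
        = ∑ q ∈ Finset.range (b ^ n), (if Pd b n q then b else 1) := by
      rw [Finset.card_filter]
      rw [show (b : ℕ) ^ (n+1) = b ^ n * b from pow_succ b n]
      rw [reindex]
      rw [Finset.sum_product]
      apply Finset.sum_congr rfl
      intro q hq
      have inner : ∀ r ∈ Finset.range b,
          (if Pd b (n+1) (q * b + r) then (1:ℕ) else 0) = (if (r = 0 ∨ Pd b n q) then 1 else 0) := by
        intro r hr
        simp only [Finset.mem_range] at hr
        congr 1
        · exact propext (pd_dec b hb n q r hr)
      rw [Finset.sum_congr rfl inner]
      by_cases hPq : Pd b n q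
      · simp only [hPq, or_true, if_true, Finset.sum_const, smul_eq_mul, mul_one,
          Finset.card_range]
      · simp only [hPq, or_false, if_neg hPq]
        rw [Finset.sum_ite_eq' (Finset.range b) 0 (fun _ => (1:ℕ))]
        simp only [Finset.mem_range, if_pos (by omega : 0 < b)]
        simp [hPq]
    rw [key]
    have hsum2 : ∀ q ∈ Finset.range (b ^ n),
        (if Pd b n q then b else 1) = 1 + (if Pd b n q then b - 1 else 0) := by
      intro q _
      split <;> omega
    rw [Finset.sum_congr rfl hsum2, Finset.sum_add_distrib, Finset.sum_const,
      Finset.card_range, smul_eq_mul, mul_one, ← Finset.sum_filter, Finset.sum_const,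
      smul_eq_mul]
    set C := ((Finset.range (b ^ n)).filter (fun a => Pd b n a)).card with hC
    set x := b - 1 with hx
    have hxb : x + 1 = b := by omega
    have e1 : x ^ (n+1) = x ^ n * x := pow_succ _ _
    have e2 : (b : ℕ) ^ (n+1) = b ^ n * b := pow_succ _ _
    rw [e1, e2]
    calc b ^ n + C * x + x ^ n * x = b ^ n + (C + x ^ n) * x := by ring
    _ = b ^ n + b ^ n * x := by rw [ih]
    _ = b ^ n * (x + 1) := by ring
    _ = b ^ n * b := by rw [hxb]

lemma count_two_pow (b : ℕ) (hb : 2 ≤ b) (n : ℕ) :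
    ((Finset.range (2 * b ^ n)).filter (fun a => Pd b n a)).card
      = 2 * (b ^ n - (b-1) ^ n) := by
  have h2 : 2 * b ^ n = b ^ n + b ^ n := by ring
  rw [Finset.card_filter, h2, Finset.sum_range_add]
  have hshift : ∀ i ∈ Finset.range (b ^ n),
      (if Pd b n (b ^ n + i) then (1:ℕ) else 0) = (if Pd b n i then 1 else 0) := by
    intro i _
    congr 1
    exact propext (pd_shift b hb n i)
  rw [Finset.sum_congr rfl hshift, ← Finset.card_filter]
  have := count_pow b hb n
  have hle : (b-1)^n ≤ b^n := Nat.pow_le_pow_left (by omega) n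
  omega


section Paths

variable {V : Type} {E : Set (V × ℤ × V)}


lemma finPath_nil (u : V) : FinPath E u [] :=
  ⟨by simp, List.isChain_nil, fun h => absurd rfl h⟩

lemma lastV_nil (u : V) : lastV u [] = u := rfl

lemma lastV_ne_nil (u : V) (p : List (V × ℤ × V)) (h : p ≠ []) :
    lastV u p = (p.getLast h).2.2 := by
  rw [lastV, List.getLastD_eq_getLast?, List.getLast?_eq_getLast h]
  rfl

lemma lastV_getElem (u : V) (p : List (V × ℤ × V)) (h : p ≠ []) :
    lastV u p = (p[p.length - 1]'(by
      have : 0 < p.length := List.length_pos_iff.mpr h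
      omega)).2.2 := by
  rw [lastV_ne_nil u p h, List.getLast_eq_getElem]

lemma lastV_append (u : V) (p q : List (V × ℤ × V)) :
    lastV u (p ++ q) = lastV (lastV u p) q := by
  rcases eq_or_ne q [] with h | h
  · subst h; rw [List.append_nil]; rfl
  · have hpq : p ++ q ≠ [] := fun hh => h (List.append_eq_nil_iff.mp hh).2
    rw [lastV_ne_nil u (p ++ q) hpq, lastV_ne_nil _ q h, List.getLast_append_of_ne_nil _ h]

lemma chain_link (u : V) (p : List (V × ℤ × V)) (hp : FinPath E u p) (i : ℕ)
    (h : i + 1 < p.length) :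
    (p[i]'(by omega)).2.2 = (p[i+1]'h).1 := by
  have := List.isChain_iff_getElem.mp hp.2.1 i (by omega)
  simpa [List.get_eq_getElem] using this

lemma head_fst (u : V) (p : List (V × ℤ × V)) (hp : FinPath E u p) (h : p ≠ []) :
    (p[0]'(List.length_pos_iff.mpr h)).1 = u := by
  have := hp.2.2 h
  rwa [List.head_eq_getElem] at this

lemma finPath_take (u : V) (p : List (V × ℤ × V)) (hp : FinPath E u p) (i : ℕ) :
    FinPath E u (p.take i) := by
  refine ⟨fun e he => hp.1 e (List.take_subset i p he), hp.2.1.take i, fun h => ?_⟩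
  have hne : p ≠ [] := by
    intro hh; subst hh; simp at h
  rw [List.head_eq_getElem, List.getElem_take]
  exact head_fst u p hp hne

lemma lastV_take_eq (u : V) (p : List (V × ℤ × V)) (i : ℕ) (hi : 0 < i) (hil : i ≤ p.length) :
    lastV u (p.take i) = (p[i-1]'(by omega)).2.2 := by
  have hne : p.take i ≠ [] := by
    apply List.ne_nil_of_length_pos
    rw [List.length_take]
    omega
  rw [lastV_getElem u _ hne]
  have hlen : (p.take i).length = i := by rw [List.length_take]; omega
  simp only [List.getElem_take, hlen]

lemma finPath_drop (u : V) (p : List (V × ℤ × V)) (hp : FinPath E u p) (i : ℕ) :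
    FinPath E (lastV u (p.take i)) (p.drop i) := by
  refine ⟨fun e he => hp.1 e (List.drop_subset i p he), hp.2.1.drop i, fun h => ?_⟩
  have hil : i < p.length := by
    by_contra hc
    exact h (List.drop_eq_nil_of_le (by omega))
  rw [List.head_eq_getElem, List.getElem_drop]
  simp only [Nat.add_zero]
  rcases Nat.eq_zero_or_pos i with h0 | h0
  · subst h0
    simp only [List.take_zero, lastV_nil]
    exact head_fst u p hp (List.ne_nil_of_length_pos (by omega))
  · rw [lastV_take_eq u p i h0 (by omega)]
    have hl := chain_link u p hp (i-1) (by omega)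
    have hi' : i - 1 + 1 = i := by omega
    simp only [hi'] at hl
    exact hl.symm

lemma finPath_append (u : V) (p q : List (V × ℤ × V)) (hp : FinPath E u p)
    (hq : FinPath E (lastV u p) q) : FinPath E u (p ++ q) := by
  refine ⟨fun e he => ?_, ?_, fun h => ?_⟩
  · rcases List.mem_append.mp he with h | h
    · exact hp.1 e h
    · exact hq.1 e h
  · refine List.isChain_append.mpr ?_
    refine ⟨hp.2.1, hq.2.1, fun x hx y hy => ?_⟩
    have hpne : p ≠ [] := by
      intro hh; subst hh; simp at hx
    have hqne : q ≠ [] := by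
      intro hh; subst hh; simp at hy
    rw [List.getLast?_eq_getLast hpne] at hx
    rw [List.head?_eq_head hqne] at hy
    simp only [Option.mem_def, Option.some_inj] at hx hy
    subst hx; subst hy
    have h1 : (p.getLast hpne).2.2 = lastV u p := (lastV_ne_nil u p hpne).symm
    have h2 : (q.head hqne).1 = lastV u p := hq.2.2 hqne
    rw [h1, h2]
  · rcases eq_or_ne p [] with hpe | hpe
    · subst hpe
      simp only [List.nil_append] at h ⊢
      have := hq.2.2 h
      rwa [lastV_nil] at this
    · rw [List.head_append_of_ne_nil hpe]
      exact hp.2.2 hpe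

lemma pathWeight_append (p q : List (V × ℤ × V)) :
    pathWeight (p ++ q) = pathWeight p + pathWeight q := by
  simp [pathWeight]

/-- Strip cycles: if all cycles are nonnegative, any path can be shortened to
one with fewer than `card V` edges, same endpoints, and no larger weight. -/
lemma shorten [Fintype V] [Nonempty V]
    (hcyc : ∀ p : List (V × ℤ × V), (p ≠ [] ∧ ∃ v, FinPath E v p ∧ lastV v p = v) →
      0 ≤ pathWeight p) :
    ∀ (L : ℕ) (p : List (V × ℤ × V)) (u : V), p.length ≤ L → FinPath E u p →
      ∃ q, FinPath E u q ∧ lastV u q = lastV u p ∧ pathWeight q ≤ pathWeight p ∧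
        q.length + 1 ≤ Fintype.card V := by
  intro L
  induction L with
  | zero =>
    intro p u hL hp
    have : p = [] := List.length_eq_zero_iff.mp (by omega)
    subst this
    exact ⟨[], hp, rfl, le_refl _, by have := Fintype.card_pos (α := V); omega⟩
  | succ L ih =>
    intro p u hL hp
    by_cases hshort : p.length + 1 ≤ Fintype.card V
    · exact ⟨p, hp, rfl, le_refl _, hshort⟩
    · -- find a repeated vertex among positions 0..p.length
      have hcard : Fintype.card V < Fintype.card (Fin (p.length + 1)) := by
        rw [Fintype.card_fin]; omega
      obtain ⟨a, b, hab, hfab⟩ := Fintype.exists_ne_map_eq_of_card_lt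
        (fun i : Fin (p.length + 1) => lastV u (p.take i.1)) hcard
      have surgery : ∀ (i j : ℕ), i < j → j ≤ p.length →
          lastV u (p.take i) = lastV u (p.take j) →
          ∃ q, FinPath E u q ∧ lastV u q = lastV u p ∧
            pathWeight q ≤ pathWeight p ∧ q.length + 1 ≤ Fintype.card V := by
        intro i j hij hjl hf
        set mid := (p.drop i).take (j - i) with hmid
        have htj : p.take j = p.take i ++ mid := by
          rw [hmid, ← List.take_add]
          congr 1
          omega
        have hmidpath : FinPath E (lastV u (p.take i)) mid :=
          finPath_take _ _ (finPath_drop u p hp i) (j - i)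
        have hmidlast : lastV (lastV u (p.take i)) mid = lastV u (p.take j) := by
          rw [htj, lastV_append]
        have hmidne : mid ≠ [] := by
          apply List.ne_nil_of_length_pos
          rw [hmid, List.length_take, List.length_drop]
          omega
        have hmidw : 0 ≤ pathWeight mid :=
          hcyc mid ⟨hmidne, lastV u (p.take i), hmidpath, by rw [hmidlast, ← hf]⟩
        have hdropj : FinPath E (lastV u (p.take i)) (p.drop j) := by
          rw [hf]
          exact finPath_drop u p hp j
        set q' := p.take i ++ p.drop j with hq'
        have hq'path : FinPath E u q' := finPath_append u _ _ (finPath_take u p hp i) hdropj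
        have hq'last : lastV u q' = lastV u p := by
          rw [hq', lastV_append, hf, ← lastV_append, List.take_append_drop]
        have hsplit : p = (p.take i ++ mid) ++ p.drop j := by
          rw [← htj, List.take_append_drop]
        have hw : pathWeight p = pathWeight q' + pathWeight mid := by
          conv_lhs => rw [hsplit]
          rw [pathWeight_append, pathWeight_append, hq', pathWeight_append]
          ring
        have hq'len : q'.length ≤ L := by
          rw [hq', List.length_append, List.length_take, List.length_drop]
          omega
        obtain ⟨q, hq1, hq2, hq3, hq4⟩ := ih q' u hq'len hq'path
        exact ⟨q, hq1, by rw [hq2, hq'last], by omega, hq4⟩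
      rcases lt_or_gt_of_ne (fun h : a.1 = b.1 => hab (Fin.ext h)) with hlt | hlt
      · exact surgery a.1 b.1 hlt (by omega) hfab
      · exact surgery b.1 a.1 hlt (by omega) hfab.symm

section MP

open Filter

variable {V : Type}

lemma list_sum_getD (l : List ℤ) (d : ℤ) :
    l.sum = ∑ j ∈ Finset.range l.length, l.getD j d := by
  induction l with
  | nil => simp
  | cons a t ih =>
    rw [List.sum_cons, List.length_cons, Finset.sum_range_succ']
    simp only [List.getD_cons_succ, List.getD_cons_zero]
    rw [← ih, add_comm]

lemma pathWeight_eq_sum (p : List (V × ℤ × V)) (d : V × ℤ × V) :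
    pathWeight p = ∑ j ∈ Finset.range p.length, (p.getD j d).2.1 := by
  rw [pathWeight, list_sum_getD (p.map fun e => e.2.1) 0]
  rw [List.length_map]
  apply Finset.sum_congr rfl
  intro j hj
  have hjl : j < p.length := Finset.mem_range.mp hj
  rw [List.getD_eq_getElem?_getD, List.getD_eq_getElem?_getD, List.getElem?_map,
    List.getElem?_eq_getElem hjl]
  rfl

/-- If a graph satisfies mean payoff then all its cycles are nonnegative. -/
lemma cycles_nonneg {E : Set (V × ℤ × V)} {N : ℕ} (hN : 1 ≤ N)
    (hW : ∀ e ∈ E, e.2.1 ∈ Wball N) (hMP : SatMP E) :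
    ∀ p, IsCycle E p → 0 ≤ pathWeight p := by
  intro p hc
  by_contra hneg
  push_neg at hneg
  obtain ⟨hne, v, hp, hlast⟩ := hc
  set m := p.length with hm
  have hm0 : 0 < m := List.length_pos_iff.mpr hne
  set dflt : V × ℤ × V := (v, 0, v) with hdflt
  set π : ℕ → V × ℤ × V := fun i => p.getD (i % m) dflt with hπ
  have hgetD : ∀ i : ℕ, ∀ h : i % m < m, π i = p[i % m]'h := by
    intro i h
    rw [hπ]
    simp only []
    rw [List.getD_eq_getElem?_getD, List.getElem?_eq_getElem h]
    rfl
  have hinf : InfPath E π := by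
    constructor
    · intro i
      rw [hgetD i (Nat.mod_lt _ hm0)]
      exact hp.1 _ (List.getElem_mem _)
    · intro i
      have hr : i % m < m := Nat.mod_lt _ hm0
      have hmod : (i % m + 1) % m = (i + 1) % m := Nat.mod_add_mod i m 1
      rcases Nat.lt_or_ge (i % m + 1) m with hcase | hcase
      · have h2 : (i + 1) % m = i % m + 1 := by
          rw [← hmod, Nat.mod_eq_of_lt hcase]
        rw [hgetD i hr, hgetD (i+1) (by rw [h2]; exact hcase)]
        have := chain_link v p hp (i % m) (by rw [hm] at hcase ⊢; exact hcase)
        convert this using 3 <;> rw [h2]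
      · have hieq : i % m + 1 = m := by omega
        have h2 : (i + 1) % m = 0 := by
          rw [← hmod, hieq, Nat.mod_self]
        rw [hgetD i hr, hgetD (i+1) (by rw [h2]; exact hm0)]
        have hieq2 : i % m = m - 1 := by omega
        have hL : (p[i % m]'hr).2.2 = lastV v p := by
          rw [lastV_getElem v p hne]
          simp only [hm] at hieq2 ⊢; simp only [hieq2]
        rw [hL, hlast]
        have hH := head_fst v p hp hne
        convert hH.symm using 3
  have hmps := hMP π hinf
  rw [MeanPayoffSeq, liminf_eq] at hmps
  set u : ℕ → ℝ := fun ℓ : ℕ => (∑ i ∈ Finset.range ℓ, ((π i).2.1 : ℝ)) / (ℓ : ℝ) with hu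
  have hwlb : ∀ i, -(N:ℤ) < (π i).2.1 := by
    intro i
    have : π i ∈ E := by
      rw [hgetD i (Nat.mod_lt _ hm0)]
      exact hp.1 _ (List.getElem_mem _)
    exact (Finset.mem_Ioo.mp (hW _ this)).1
  have hulb : ∀ ℓ, -(N:ℝ) ≤ u ℓ := by
    intro ℓ
    have hN0 : (0:ℝ) ≤ N := by positivity
    rcases Nat.eq_zero_or_pos ℓ with h0 | h0
    · subst h0
      have h00 : u 0 = 0 := by simp [hu]
      rw [h00]
      linarith
    · have hsum : -(N:ℤ) * ℓ ≤ ∑ i ∈ Finset.range ℓ, (π i).2.1 := by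
        calc -(N:ℤ) * ℓ = ∑ _i ∈ Finset.range ℓ, (-(N:ℤ)) := by
              rw [Finset.sum_const, Finset.card_range]; ring
        _ ≤ _ := Finset.sum_le_sum (fun i _ => le_of_lt (hwlb i))
      show -(N:ℝ) ≤ (∑ i ∈ Finset.range ℓ, ((π i).2.1 : ℝ)) / (ℓ : ℝ)
      rw [le_div_iff₀ (by exact_mod_cast h0 : (0:ℝ) < (ℓ:ℝ))]
      calc -(N:ℝ) * ℓ = (((-(N:ℤ) * ℓ : ℤ)):ℝ) := by push_cast; ring
      _ ≤ (((∑ i ∈ Finset.range ℓ, (π i).2.1 : ℤ)):ℝ) := by exact_mod_cast hsum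
      _ = ∑ i ∈ Finset.range ℓ, ((π i).2.1:ℝ) := by push_cast; rfl
  have hWp : ∀ K : ℕ, ∑ i ∈ Finset.range (K * m), (π i).2.1 = K * pathWeight p := by
    intro K
    induction K with
    | zero => simp
    | succ K ih =>
      have hKm : (K + 1) * m = K * m + m := by ring
      rw [hKm, Finset.sum_range_add, ih]
      have hper : ∀ j ∈ Finset.range m, (π (K * m + j)).2.1 = (p.getD j dflt).2.1 := by
        intro j hj
        have hjm : j < m := Finset.mem_range.mp hj
        rw [hπ]
        simp only []
        rw [show (K * m + j) % m = j from by
          rw [mul_comm K m, Nat.mul_add_mod, Nat.mod_eq_of_lt hjm]]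
      rw [Finset.sum_congr rfl hper, ← pathWeight_eq_sum p dflt]
      push_cast
      ring
  have hub : ∀ a ∈ {a : ℝ | ∀ᶠ ℓ in atTop, a ≤ u ℓ}, a ≤ (pathWeight p : ℝ) / (m : ℝ) := by
    intro a ha
    rw [Set.mem_setOf_eq, eventually_atTop] at ha
    obtain ⟨ℓ₀, hℓ₀⟩ := ha
    set K := ℓ₀ + 1 with hK
    have hKm : ℓ₀ ≤ K * m := by
      calc ℓ₀ ≤ ℓ₀ + 1 := by omega
      _ ≤ (ℓ₀ + 1) * m := Nat.le_mul_of_pos_right _ hm0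
    have hthis := hℓ₀ (K * m) hKm
    have heval : u (K * m) = (pathWeight p : ℝ) / (m : ℝ) := by
      calc u (K * m) = ((K:ℝ) * (pathWeight p : ℝ)) / ((K:ℝ) * (m:ℝ)) := by
            rw [hu]
            show (∑ i ∈ Finset.range (K * m), ((π i).2.1 : ℝ)) / ((K * m : ℕ) : ℝ)
                = ((K:ℝ) * (pathWeight p : ℝ)) / ((K:ℝ) * (m:ℝ))
            congr 1
            · rw [show (∑ i ∈ Finset.range (K * m), ((π i).2.1 : ℝ))
                = (((∑ i ∈ Finset.range (K * m), (π i).2.1 : ℤ)) : ℝ) from by push_cast; rfl,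
                hWp K]
              push_cast
              ring
            · push_cast
              ring
      _ = (pathWeight p : ℝ) / (m : ℝ) := mul_div_mul_left _ _ (by positivity : (K:ℝ) ≠ 0)
    rw [heval] at hthis
    exact hthis
  have hne' : {a : ℝ | ∀ᶠ ℓ in atTop, a ≤ u ℓ}.Nonempty :=
    ⟨-(N:ℝ), Filter.Eventually.of_forall hulb⟩
  have hle := csSup_le hne' hub
  have hcon : (pathWeight p : ℝ) / (m : ℝ) < 0 := by
    apply div_neg_of_neg_of_pos
    · exact_mod_cast hneg
    · exact_mod_cast hm0
  linarith

/-- The linear graph over a bounded set of integers satisfies mean payoff. -/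
lemma satMP_LinE (W : Finset ℤ) (A : Set ℤ) (M : ℕ)
    (hA : ∀ x ∈ A, 0 ≤ x ∧ x < (M:ℤ)) : SatMP (LinE W A) := by
  intro π hπ
  rw [MeanPayoffSeq, liminf_eq]
  set u : ℕ → ℝ := fun ℓ : ℕ => (∑ i ∈ Finset.range ℓ, ((π i).2.1 : ℝ)) / (ℓ : ℝ) with hu
  have hedge : ∀ i, (π i).1 ∈ A ∧ (π i).2.2 ∈ A ∧ (π i).2.2 - (π i).1 ≤ (π i).2.1 := by
    intro i
    obtain ⟨h1, h2, _, h4⟩ := hπ.1 i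
    exact ⟨h1, h2, h4⟩
  have htel : ∀ ℓ : ℕ, -(M:ℤ) ≤ ∑ i ∈ Finset.range ℓ, (π i).2.1 := by
    intro ℓ
    have hstep : ∀ i, (π (i+1)).1 - (π i).1 ≤ (π i).2.1 := by
      intro i
      have := (hedge i).2.2
      rw [hπ.2 i] at this
      exact this
    calc -(M:ℤ) ≤ (π ℓ).1 - (π 0).1 := by
          have h1 := (hA _ (hedge ℓ).1)
          have h2 := (hA _ (hedge 0).1)
          omega
    _ = ∑ i ∈ Finset.range ℓ, ((π (i+1)).1 - (π i).1) := (Finset.sum_range_sub (fun i => (π i).1) ℓ).symm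
    _ ≤ ∑ i ∈ Finset.range ℓ, (π i).2.1 := Finset.sum_le_sum (fun i _ => hstep i)
  have hulb : ∀ ℓ : ℕ, 1 ≤ ℓ → -(M:ℝ)/(ℓ:ℝ) ≤ u ℓ := by
    intro ℓ hℓ
    show -(M:ℝ)/(ℓ:ℝ) ≤ (∑ i ∈ Finset.range ℓ, ((π i).2.1 : ℝ)) / (ℓ : ℝ)
    rw [div_le_div_iff_of_pos_right (by exact_mod_cast hℓ : (0:ℝ) < (ℓ:ℝ))]
    calc -(M:ℝ) = ((-(M:ℤ) : ℤ) : ℝ) := by push_cast; ring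
    _ ≤ (((∑ i ∈ Finset.range ℓ, (π i).2.1 : ℤ)) : ℝ) := by exact_mod_cast htel ℓ
    _ = ∑ i ∈ Finset.range ℓ, ((π i).2.1 : ℝ) := by push_cast; rfl
  have hM0 : (0:ℝ) ≤ (M:ℝ) := by positivity
  have hulb' : ∀ ℓ : ℕ, -(M:ℝ) ≤ u ℓ := by
    intro ℓ
    rcases Nat.eq_zero_or_pos ℓ with h0 | h0
    · subst h0
      have h00 : u 0 = 0 := by simp [hu]
      rw [h00]; linarith
    · have h1 := hulb ℓ h0
      have h2 : (M:ℝ)/(ℓ:ℝ) ≤ (M:ℝ) := by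
        apply div_le_self hM0
        exact_mod_cast h0
      have h3 : -(M:ℝ) ≤ -(M:ℝ)/(ℓ:ℝ) := by
        rw [neg_div]
        linarith
      linarith
  -- the set of eventual lower bounds
  set A' := {a : ℝ | ∀ᶠ ℓ in atTop, a ≤ u ℓ} with hA'
  have hWmax : ∃ C : ℝ, ∀ ℓ : ℕ, u ℓ ≤ C := by
    have hwub : ∀ i, ((π i).2.1 : ℝ) ≤ ((W.max' ⟨(π 0).2.1, (hπ.1 0).2.2.1⟩ : ℤ) : ℝ) := by
      intro i
      have : (π i).2.1 ∈ W := (hπ.1 i).2.2.1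
      exact_mod_cast W.le_max' _ this
    set C := ((W.max' ⟨(π 0).2.1, (hπ.1 0).2.2.1⟩ : ℤ) : ℝ) with hC
    refine ⟨max C 0, fun ℓ => ?_⟩
    rcases Nat.eq_zero_or_pos ℓ with h0 | h0
    · subst h0
      have h00 : u 0 = 0 := by simp [hu]
      rw [h00]
      exact le_max_right _ _
    · have hsum : (∑ i ∈ Finset.range ℓ, ((π i).2.1:ℝ)) ≤ ℓ * C := by
        calc (∑ i ∈ Finset.range ℓ, ((π i).2.1:ℝ)) ≤ ∑ _i ∈ Finset.range ℓ, C :=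
              Finset.sum_le_sum (fun i _ => hwub i)
        _ = ℓ * C := by rw [Finset.sum_const, Finset.card_range]; ring
      have : u ℓ ≤ C := by
        show (∑ i ∈ Finset.range ℓ, ((π i).2.1 : ℝ)) / (ℓ : ℝ) ≤ C
        rw [div_le_iff₀ (by exact_mod_cast h0 : (0:ℝ) < (ℓ:ℝ))]
        calc (∑ i ∈ Finset.range ℓ, ((π i).2.1:ℝ)) ≤ ℓ * C := hsum
        _ = C * ℓ := by ring
      exact le_trans this (le_max_left _ _)
  obtain ⟨C, hC⟩ := hWmax
  have hbdd : BddAbove A' := by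
    refine ⟨C, fun a ha => ?_⟩
    rw [hA', Set.mem_setOf_eq, eventually_atTop] at ha
    obtain ⟨ℓ₀, hℓ₀⟩ := ha
    exact le_trans (hℓ₀ ℓ₀ (le_refl _)) (hC ℓ₀)
  have hmem : ∀ ε : ℝ, 0 < ε → -ε ∈ A' := by
    intro ε hε
    obtain ⟨n₀, hn₀⟩ := exists_nat_ge ((M:ℝ)/ε)
    rw [hA', Set.mem_setOf_eq, eventually_atTop]
    refine ⟨max 1 n₀, fun ℓ hℓ => ?_⟩
    have hℓ1 : 1 ≤ ℓ := le_trans (le_max_left _ _) hℓ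
    have hℓn : (n₀:ℝ) ≤ (ℓ:ℝ) := by exact_mod_cast le_trans (le_max_right _ _) hℓ
    have hℓpos : (0:ℝ) < (ℓ:ℝ) := by exact_mod_cast hℓ1
    have h1 : (M:ℝ) ≤ ℓ * ε := by
      have : (M:ℝ)/ε ≤ (ℓ:ℝ) := le_trans hn₀ hℓn
      rw [div_le_iff₀ hε] at this
      linarith
    have h2 : -ε ≤ -(M:ℝ)/(ℓ:ℝ) := by
      rw [neg_div, neg_le_neg_iff, div_le_iff₀ hℓpos]
      linarith
    exact le_trans h2 (hulb ℓ hℓ1)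
  by_contra hcon
  push_neg at hcon
  have hs2 := le_csSup hbdd (hmem (-sSup A' / 2) (by linarith))
  linarith

end MP

section Assemble

open Filter

lemma pathWeight_ge {V : Type} (N : ℕ) (p : List (V × ℤ × V))
    (hall : ∀ e ∈ p, e.2.1 ∈ Wball N) :
    -(p.length : ℤ) * ((N:ℤ) - 1) ≤ pathWeight p := by
  induction p with
  | nil => simp [pathWeight]
  | cons e t ih =>
    have he : e.2.1 ∈ Wball N := hall e (List.mem_cons_self)
    have hew : -(N:ℤ) < e.2.1 := (Finset.mem_Ioo.mp he).1
    have iht := ih (fun e' he' => hall e' (List.mem_cons_of_mem e he'))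
    have hw : pathWeight (e :: t) = e.2.1 + pathWeight t := by
      simp [pathWeight]
    have hlen : (((e :: t).length : ℤ)) * ((N:ℤ) - 1)
        = (t.length : ℤ) * ((N:ℤ) - 1) + ((N:ℤ) - 1) := by
      push_cast [List.length_cons]
      ring
    rw [hw]
    have h1 : -(t.length : ℤ) * ((N:ℤ)-1) ≤ pathWeight t := iht
    have h2 : -((N:ℤ) - 1) ≤ e.2.1 := by omega
    have h3 : -(((e :: t).length:ℤ)) * ((N:ℤ)-1) = -(t.length : ℤ) * ((N:ℤ) - 1) + -((N:ℤ)-1) := by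
      push_cast [List.length_cons]
      ring
    rw [h3]
    exact add_le_add h2 h1 |>.trans_eq' (by ring)

/-- Existence of a potential function for a graph with nonnegative cycles. -/
lemma exists_potential {W : Finset ℤ} (G : WGraph W) (n N : ℕ) (hN : 1 ≤ N)
    (hW : W = Wball N) (hn : 1 ≤ n) (hcard : Fintype.card G.V ≤ n)
    (hMP : SatMP G.E) :
    ∃ d : G.V → ℤ, (∀ e ∈ G.E, d e.2.2 ≤ d e.1 + e.2.1) ∧
      (∀ v, -((n:ℤ) - 1) * ((N:ℤ) - 1) ≤ d v ∧ d v ≤ 0) := by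
  have hNE : Nonempty G.V := ⟨G.init⟩
  have hwt : ∀ e ∈ G.E, e.2.1 ∈ Wball N := by
    intro e he
    rw [← hW]
    exact G.wt e he
  have hcyc : ∀ p, IsCycle G.E p → 0 ≤ pathWeight p := cycles_nonneg hN hwt hMP
  have hcyc' : ∀ p : List (G.V × ℤ × G.V),
      (p ≠ [] ∧ ∃ v, FinPath G.E v p ∧ lastV v p = v) → 0 ≤ pathWeight p := by
    intro p hp
    exact hcyc p ⟨hp.1, hp.2⟩
  set B₀ : ℤ := -((n:ℤ) - 1) * ((N:ℤ) - 1) with hB₀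
  -- every path weight is at least B₀
  have hpw : ∀ (u : G.V) (p : List (G.V × ℤ × G.V)), FinPath G.E u p → B₀ ≤ pathWeight p := by
    intro u p hp
    obtain ⟨q, hq, hqlast, hqw, hqlen⟩ := shorten hcyc' p.length p u (le_refl _) hp
    have h1 : -(q.length : ℤ) * ((N:ℤ)-1) ≤ pathWeight q :=
      pathWeight_ge N q (fun e he => hwt e (hq.1 e he))
    have h2 : (q.length : ℤ) ≤ (n:ℤ) - 1 := by
      have : q.length + 1 ≤ n := le_trans hqlen hcard
      omega
    have h3 : B₀ ≤ -(q.length : ℤ) * ((N:ℤ)-1) := by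
      rw [hB₀, neg_mul, neg_mul, neg_le_neg_iff]
      apply mul_le_mul_of_nonneg_right h2
      omega
    omega
  set S : G.V → Set ℤ := fun v =>
    {s | ∃ u p, FinPath G.E u p ∧ lastV u p = v ∧ pathWeight p = s} with hS
  have hmem0 : ∀ v, (0:ℤ) ∈ S v := by
    intro v
    exact ⟨v, [], finPath_nil v, rfl, rfl⟩
  have hlb : ∀ v, ∀ s ∈ S v, B₀ ≤ s := by
    rintro v s ⟨u, p, hp, hlast, hw⟩
    rw [← hw]
    exact hpw u p hp
  have hbdd : ∀ v, BddBelow (S v) := fun v => ⟨B₀, hlb v⟩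
  set d : G.V → ℤ := fun v => sInf (S v) with hd
  refine ⟨d, ?_, ?_⟩
  · intro e he
    have hplus : ∀ s ∈ S e.1, s + e.2.1 ∈ S e.2.2 := by
      rintro s ⟨u, p, hp, hlast, hw⟩
      refine ⟨u, p ++ [e], ?_, ?_, ?_⟩
      · apply finPath_append u p [e] hp
        rw [hlast]
        refine ⟨?_, List.isChain_singleton e, ?_⟩
        · intro e' he'
          rw [List.mem_singleton] at he'
          subst he'
          exact he
        · intro h
          rfl
      · rw [lastV_append]
        rfl
      · rw [pathWeight_append, hw]
        simp [pathWeight]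
    have hfin : d e.2.2 - e.2.1 ≤ d e.1 := by
      apply le_csInf ⟨0, hmem0 e.1⟩
      intro s hs
      have hci : d e.2.2 ≤ s + e.2.1 := csInf_le (hbdd e.2.2) (hplus s hs)
      omega
    omega
  · intro v
    constructor
    · exact le_csInf ⟨0, hmem0 v⟩ (hlb v)
    · exact csInf_le (hbdd v) (hmem0 v)

end Assemble

section Final

lemma pow_sub_bound (b : ℕ) (hb : 2 ≤ b) : ∀ n, 1 ≤ n → b ^ n ≤ (b-1) ^ n + n * b ^ (n-1) := by
  intro n
  induction n with
  | zero => omega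
  | succ n ih =>
    intro _
    rcases Nat.eq_zero_or_pos n with h0 | h0
    · subst h0
      simp
      omega
    · have ihn := ih h0
      have h1 : b ^ (n+1) = b ^ n * b := pow_succ b n
      have h2 : b ^ n ≤ ((b-1) ^ n + n * b ^ (n-1)) := ihn
      have h3 : b ^ n * b ≤ ((b-1) ^ n + n * b ^ (n-1)) * b :=
        Nat.mul_le_mul_right b h2
      have h4 : ((b-1) ^ n + n * b ^ (n-1)) * b = (b-1)^n * b + n * (b ^ (n-1) * b) := by ring
      have h5 : b ^ (n-1) * b = b ^ n := by
        rw [← pow_succ]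
        congr 1
        omega
      have h6 : (b-1)^n * b = (b-1)^(n+1) + (b-1)^n := by
        calc (b-1)^n * b = (b-1)^n * ((b-1) + 1) := by rw [Nat.sub_add_cancel (by omega)]
        _ = (b-1)^n * (b-1) + (b-1)^n := by ring
        _ = (b-1)^(n+1) + (b-1)^n := by rw [← pow_succ]
      have h7 : (b-1)^n ≤ b^n := Nat.pow_le_pow_left (by omega) n
      have h8 : (n+1) * b ^ ((n+1)-1) = n * b ^ n + b ^ n := by
        have hnn : (n+1) - 1 = n := by omega
        rw [hnn]
        ring
      rw [h5] at h4
      rw [h4] at h3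
      omega

theorem digitZeroSet_universal' (n N b : ℕ) (hn : 1 ≤ n) (hN : 1 ≤ N) (hb : 2 ≤ b)
    (hbase : n * N = b ^ n) :
    Universal n (Wball N) (LinE (Wball N) (digitZeroSet n N b)) ∧
    (digitZeroSet n N b).ncard = 2 * (b ^ n - (b - 1) ^ n) ∧
    (digitZeroSet n N b).ncard ≤ 2 * n * b ^ (n - 1) := by
  have hbnz : (n:ℤ) * (N:ℤ) = (b:ℤ)^n := by exact_mod_cast hbase
  -- cardinality
  have hset : digitZeroSet n N b
      = (fun m : ℕ => (m:ℤ)) '' ↑((Finset.range (2*n*N)).filter (fun a => Pd b n a)) := by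
    ext a
    constructor
    · rintro ⟨h0, h1, i, hi, hd⟩
      refine ⟨a.toNat, ?_, Int.toNat_of_nonneg h0⟩
      simp only [Finset.coe_filter, Set.mem_setOf_eq, Finset.mem_range]
      constructor
      · have : a < ((2*n*N : ℕ) : ℤ) := by push_cast; linarith
        omega
      · refine ⟨i, hi, ?_⟩
        have htr : ((a.toNat + 0 : ℕ):ℤ) / (b:ℤ)^i % (b:ℤ)
            = (((a.toNat / b^i % b : ℕ)) : ℤ) := by
          rw [Int.natCast_mod, Int.natCast_ediv, Nat.cast_pow]
          push_cast
          ring_nf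
        have ha' : ((a.toNat : ℕ) : ℤ) = a := Int.toNat_of_nonneg h0
        have : (((a.toNat / b^i % b : ℕ)) : ℤ) = 0 := by
          rw [← htr]
          simp only [Nat.add_zero, ha']
          exact hd
        exact_mod_cast this
    · rintro ⟨m, hm, rfl⟩
      simp only [Finset.coe_filter, Set.mem_setOf_eq, Finset.mem_range] at hm
      obtain ⟨hmlt, i, hi, hdig⟩ := hm
      refine ⟨by positivity, ?_, i, hi, ?_⟩
      · have : (m:ℤ) < ((2*n*N : ℕ):ℤ) := by exact_mod_cast hmlt
        push_cast at this ⊢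
        linarith
      · have htr : ((m : ℕ):ℤ) / (b:ℤ)^i % (b:ℤ) = (((m / b^i % b : ℕ)) : ℤ) := by
          rw [Int.natCast_mod, Int.natCast_ediv, Nat.cast_pow]
        rw [htr]
        exact_mod_cast hdig
  have hcardeq : (digitZeroSet n N b).ncard = 2 * (b ^ n - (b-1) ^ n) := by
    rw [hset, Set.ncard_image_of_injective _ (fun x y h => by exact_mod_cast h),
      Set.ncard_coe_finset]
    rw [show 2*n*N = 2 * b^n by rw [mul_assoc, hbase]]
    exact count_two_pow b hb n
  refine ⟨⟨?_, ?_⟩, hcardeq, ?_⟩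
  · -- SatMP of the linear graph
    apply satMP_LinE _ _ (2*n*N)
    rintro x ⟨h0, h1, _⟩
    refine ⟨h0, ?_⟩
    push_cast
    linarith
  · -- homomorphism
    intro G hcard hMP
    obtain ⟨d, hedge, hbounds⟩ := exists_potential G n N hN rfl hn hcard hMP
    have hNE : Nonempty G.V := ⟨G.init⟩
    have himg : (Finset.univ.image d).Nonempty :=
      ⟨d G.init, Finset.mem_image_of_mem d (Finset.mem_univ _)⟩
    set μ := (Finset.univ.image d).min' himg with hμ
    have hμle : ∀ v, μ ≤ d v := fun v =>
      Finset.min'_le _ _ (Finset.mem_image_of_mem d (Finset.mem_univ v))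
    obtain ⟨v₀, _, hv₀⟩ := Finset.mem_image.mp ((Finset.univ.image d).min'_mem himg)
    have hμlb : -(((n:ℤ)-1) * ((N:ℤ)-1)) ≤ μ := by
      have hμv : μ = d v₀ := by rw [hμ, hv₀]
      rw [hμv, ← neg_mul]
      exact (hbounds v₀).1
    set q : G.V → ℕ := fun v => (d v - μ).toNat with hq
    have hqd : ∀ v, (q v : ℤ) = d v - μ := fun v =>
      Int.toNat_of_nonneg (by have := hμle v; omega)
    have hlen : (Finset.univ.toList.map q).length ≤ n := by
      rw [List.length_map, Finset.length_toList, Finset.card_univ]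
      exact hcard
    obtain ⟨c, hc, hcprop⟩ := ulem b hb n (Finset.univ.toList.map q) hlen
    set φ : G.V → ℤ := fun v => ((q v + c : ℕ) : ℤ) with hφ
    have hqb : ∀ v, (q v : ℤ) ≤ ((n:ℤ)-1)*((N:ℤ)-1) := by
      intro v
      rw [hqd]
      have h1 := (hbounds v).2
      omega
    have hbound : ∀ v, φ v < 2 * (n:ℤ) * (N:ℤ) := by
      intro v
      have h1 := hqb v
      have h2 : (c:ℤ) < ((b^n : ℕ):ℤ) := by exact_mod_cast hc
      have h3 : ((b^n:ℕ):ℤ) = (n:ℤ)*(N:ℤ) := by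
        push_cast
        linarith [hbnz]
      have hexp : ((n:ℤ)-1)*((N:ℤ)-1) = (n:ℤ)*(N:ℤ) - n - N + 1 := by ring
      have hn' : (1:ℤ) ≤ n := by exact_mod_cast hn
      have hN' : (1:ℤ) ≤ N := by exact_mod_cast hN
      have hgoal2 : 2*(n:ℤ)*(N:ℤ) = 2*((n:ℤ)*(N:ℤ)) := by ring
      rw [hφ]
      push_cast
      rw [hgoal2]
      omega
    have hdig : ∀ v, ∃ i < n, (φ v / (b:ℤ)^i) % (b:ℤ) = 0 := by
      intro v
      obtain ⟨i, hi, hnat⟩ := hcprop (q v)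
        (List.mem_map_of_mem (f := q) (Finset.mem_toList.mpr (Finset.mem_univ v)))
      refine ⟨i, hi, ?_⟩
      have htr : ((q v + c : ℕ):ℤ) / (b:ℤ)^i % (b:ℤ)
          = (((q v + c) / b^i % b : ℕ) : ℤ) := by
        rw [Int.natCast_mod, Int.natCast_ediv, Nat.cast_pow]
      rw [hφ]
      simp only []
      rw [htr]
      exact_mod_cast hnat
    have hmem : ∀ v, φ v ∈ digitZeroSet n N b := by
      intro v
      exact ⟨by rw [hφ]; positivity, hbound v, hdig v⟩
    refine ⟨φ, ?_⟩
    intro e he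
    refine ⟨hmem e.1, hmem e.2.2, G.wt e he, ?_⟩
    have h1 := hedge e he
    have h2 := hqd e.2.2
    have h3 := hqd e.1
    show φ e.2.2 - φ e.1 ≤ e.2.1
    rw [hφ]
    push_cast
    omega
  · -- size bound
    rw [hcardeq]
    have h1 := pow_sub_bound b hb n hn
    have h2 : (b-1)^n ≤ b^n := Nat.pow_le_pow_left (by omega) n
    have h3 : b ^ n - (b-1)^n ≤ n * b ^ (n-1) := by omega
    calc 2 * (b ^ n - (b-1)^n) ≤ 2 * (n * b ^ (n-1)) := Nat.mul_le_mul_left 2 h3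
    _ = 2 * n * b ^ (n-1) := by ring

end Final

/-- for `n, N ≥ 1` and `b ≥ 2` with `nN = b^n`, the
`(-N,N)`-linear graph on `digitZeroSet n N b` is `(n, (-N,N))`-universal, and its
number of vertices is `2 (b^n - (b-1)^n)`, which is at most `2 n b^(n-1)`. -/
theorem digitZeroSet_universal (n N b : ℕ) (hn : 1 ≤ n) (hN : 1 ≤ N) (hb : 2 ≤ b)
    (hbase : n * N = b ^ n) :
    Universal n (Wball N) (LinE (Wball N) (digitZeroSet n N b)) ∧
    (digitZeroSet n N b).ncard = 2 * (b ^ n - (b - 1) ^ n) ∧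
    (digitZeroSet n N b).ncard ≤ 2 * n * b ^ (n - 1) := by
  exact digitZeroSet_universal' n N b hn hN hb hbase
end Paths
end

section
/- For all integers n ≥ 1 and N ≥ 1, every (n,(−N,N))-universal graph U satisfies |U|^n ≥ N^{n−1}; equivalently, |U| ≥ N^{1−1/n}. -/
open Filter


-- ===== auxiliary material added for the proof =====

open Fin.NatCast

lemma mp_of_bounded (w : ℕ → ℤ) (C : ℝ)
    (h : ∀ ℓ, |∑ i ∈ Finset.range ℓ, (w i : ℝ)| ≤ C) : MeanPayoffSeq w := by
  have ht : Tendsto (fun ℓ : ℕ => (∑ i ∈ Finset.range ℓ, (w i : ℝ)) / (ℓ : ℝ)) atTop (nhds 0) := by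
    have h0 : Tendsto (fun ℓ : ℕ => C / (ℓ : ℝ)) atTop (nhds 0) :=
      tendsto_const_div_atTop_nhds_zero_nat C
    apply squeeze_zero_norm _ h0
    intro ℓ
    rcases Nat.eq_zero_or_pos ℓ with h1 | h1
    · subst h1; simp
    · rw [Real.norm_eq_abs, abs_div]
      have hl : (0:ℝ) < ℓ := by positivity
      rw [abs_of_pos hl]
      gcongr
      exact h ℓ
  unfold MeanPayoffSeq
  rw [ht.liminf_eq]

lemma not_mp (w : ℕ → ℤ) (B c : ℝ) (hc : c < 0)
    (hlow : ∀ ℓ : ℕ, -B ≤ (∑ i ∈ Finset.range ℓ, (w i : ℝ)) / (ℓ : ℝ))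
    (hfreq : ∃ᶠ ℓ in atTop, (∑ i ∈ Finset.range ℓ, (w i : ℝ)) / (ℓ : ℝ) ≤ c) :
    ¬ MeanPayoffSeq w := by
  intro hmp
  have hb : IsBoundedUnder (· ≥ ·) atTop
      (fun ℓ : ℕ => (∑ i ∈ Finset.range ℓ, (w i : ℝ)) / (ℓ : ℝ)) :=
    Filter.isBoundedUnder_of ⟨-B, fun ℓ => hlow ℓ⟩
  have := Filter.liminf_le_of_frequently_le hfreq hb
  unfold MeanPayoffSeq at hmp
  linarith

/-- The cycle graph determined by a potential function `a` on `Fin n`. -/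
def cycE (n : ℕ) [NeZero n] (a : Fin n → ℤ) : Set (Fin n × ℤ × Fin n) :=
  Set.range (fun k => (k, a (k + 1) - a k, k + 1))

def edg (n : ℕ) [NeZero n] (a : Fin n → ℤ) (j : ℕ) : Fin n × ℤ × Fin n :=
  ((j : Fin n), a ((j : Fin n) + 1) - a (j : Fin n), (j : Fin n) + 1)

lemma edg_snd (n : ℕ) [NeZero n] (a : Fin n → ℤ) (j : ℕ) :
    (edg n a j).2.2 = ((j + 1 : ℕ) : Fin n) := by
  simp only [edg]; push_cast; ring

lemma pathTo (n : ℕ) [NeZero n] (a : Fin n → ℤ) (m : ℕ) :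
    FinPath (cycE n a) 0 ((List.range m).map (edg n a)) ∧
      lastV 0 ((List.range m).map (edg n a)) = (m : Fin n) := by
  induction m with
  | zero => refine ⟨⟨by simp, List.isChain_nil, by simp⟩, by simp [lastV]⟩
  | succ m ih =>
    obtain ⟨⟨hmem, hch, hhd⟩, hlast⟩ := ih
    rw [List.range_succ, List.map_append]
    refine ⟨⟨?_, ?_, ?_⟩, ?_⟩
    · intro e he
      rcases List.mem_append.mp he with h | h
      · exact hmem e h
      · simp at h; subst h; exact ⟨(m : Fin n), rfl⟩
    · apply List.IsChain.append hch (by simp)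
      intro x hx y hy
      simp at hy
      subst hy
      have hx2 : x = edg n a (m - 1) := by
        rcases Nat.eq_zero_or_pos m with h0 | h0
        · subst h0; simp at hx
        · have hr : List.range m = List.range (m-1) ++ [m-1] := by
            rw [← List.range_succ]; congr 1; omega
          rw [hr] at hx; simp at hx; exact hx.symm
      rw [hx2, edg_snd]
      have : m - 1 + 1 = m := by
        rcases Nat.eq_zero_or_pos m with h0 | h0
        · subst h0; simp at hx
        · omega
      rw [this]; rfl
    · intro h
      rcases Nat.eq_zero_or_pos m with h0 | h0
      · subst h0; simp [edg]
      · rw [List.head_append_of_ne_nil (by simp; omega)]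
        exact hhd (by simp; omega)
    · unfold lastV
      simp only [List.map_cons, List.map_nil]
      rw [List.getLastD_concat]
      exact edg_snd n a m

lemma satMP_cyc (n N : ℕ) [NeZero n] (a : Fin n → ℤ)
    (ha : ∀ k, 0 ≤ a k ∧ a k < N) : SatMP (cycE n a) := by
  intro π hπ
  obtain ⟨he, hc⟩ := hπ
  have hval : ∀ m, (π m).2.1 = a ((π m).1 + 1) - a ((π m).1) ∧ (π m).2.2 = (π m).1 + 1 := by
    intro m
    obtain ⟨k, hk⟩ := he m
    rw [← hk]
    exact ⟨rfl, rfl⟩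
  apply mp_of_bounded _ (N : ℝ)
  intro ℓ
  have hsum : (∑ j ∈ Finset.range ℓ, (π j).2.1) = a ((π ℓ).1) - a ((π 0).1) := by
    have tele := Finset.sum_range_sub (fun m => a ((π m).1)) ℓ
    rw [← tele]
    apply Finset.sum_congr rfl
    intro j _
    have h2 : (π (j+1)).1 = (π j).1 + 1 := by rw [← hc j, (hval j).2]
    rw [(hval j).1, h2]
  have habs : |a ((π ℓ).1) - a ((π 0).1)| ≤ (N : ℤ) := by
    have h1 := ha ((π ℓ).1); have h2 := ha ((π 0).1)
    rw [abs_le]; omega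
  have hcast : (∑ j ∈ Finset.range ℓ, ((π j).2.1 : ℝ))
      = ((∑ j ∈ Finset.range ℓ, (π j).2.1 : ℤ) : ℝ) := by push_cast; rfl
  rw [hcast, hsum]
  exact_mod_cast habs

lemma inj_aux (n N : ℕ) [NeZero n] {U : Type} (EU : Set (U × ℤ × U))
    (hSat : SatMP EU) (a b : Fin n → ℤ) (ha0 : a 0 = 0) (hb0 : b 0 = 0)
    (ha : ∀ k, 0 ≤ a k ∧ a k < N) (hb : ∀ k, 0 ≤ b k ∧ b k < N)
    (ψ : Fin n → U) (hha : IsHom (cycE n a) EU ψ) (hhb : IsHom (cycE n b) EU ψ)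
    (i : Fin n) (hi : a i < b i) : False := by
  have hn : 0 < n := Nat.pos_of_ne_zero (NeZero.ne n)
  set d : ℤ := a i - b i with hd_def
  have hd : d ≤ -1 := by omega
  have hdlb : -(N:ℤ) + 1 ≤ d := by
    have := (ha i).1; have := (hb i).2; omega
  set γ : ℕ → ℤ := fun m => (m / n : ℕ) * d +
    (if m % n ≤ i.val then a (m : Fin n) else b (m : Fin n) + d) with hγ_def
  set π : ℕ → U × ℤ × U := fun m => (ψ (m : Fin n), γ (m+1) - γ m, ψ ((m+1 : ℕ) : Fin n))
    with hπ_def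
  have hvb : ∀ m : ℕ, ((m : Fin n)).val = m % n := fun m => Fin.val_natCast m n
  have hcast_succ : ∀ m : ℕ, ((m+1 : ℕ) : Fin n) = (m : Fin n) + 1 := by
    intro m; push_cast; ring
  have hdm : ∀ m : ℕ, (m % n + 1 < n → (m+1) % n = m % n + 1 ∧ (m+1)/n = m/n) ∧
      (m % n + 1 = n → (m+1) % n = 0 ∧ (m+1)/n = m/n + 1) := by
    intro m
    constructor
    · intro h
      have h1 : m + 1 = n * (m / n) + (m % n + 1) := by
        have := Nat.div_add_mod m n; omega
      constructor
      · rw [h1, Nat.mul_add_mod, Nat.mod_eq_of_lt h]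
      · rw [h1, Nat.mul_add_div hn, Nat.div_eq_of_lt h]; simp
    · intro h
      have h1 : m + 1 = n * (m / n + 1) + 0 := by
        rw [Nat.mul_succ]; have := Nat.div_add_mod m n; omega
      constructor
      · rw [h1, Nat.mul_add_mod]; exact Nat.zero_mod n
      · rw [h1, Nat.mul_add_div hn]; simp
  have hstep : ∀ m : ℕ, γ (m+1) - γ m =
      (if m % n < i.val then a ((m:Fin n) + 1) - a (m:Fin n)
       else b ((m:Fin n) + 1) - b (m:Fin n)) := by
    intro m
    have hr : m % n < n := Nat.mod_lt m hn
    have hI : i.val < n := i.isLt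
    have hmi : m % n = i.val → (m : Fin n) = i := by
      intro h; apply Fin.ext; rw [hvb m, h]
    by_cases h1 : m % n + 1 < n
    · obtain ⟨hm1, hq1⟩ := (hdm m).1 h1
      simp only [hγ_def, hm1, hq1, hcast_succ]
      rcases lt_trichotomy (m % n) i.val with hlt | heq | hgt
      · rw [if_pos (by omega), if_pos (by omega), if_pos hlt]; ring
      · rw [if_neg (by omega), if_pos (by omega), if_neg (by omega), hmi heq]
        simp only [hd_def]; ring
      · rw [if_neg (by omega), if_neg (by omega), if_neg (by omega)]; ring
    · have h2 : m % n + 1 = n := by omega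
      obtain ⟨hm1, hq1⟩ := (hdm m).2 h2
      have hc1 : ((m+1 : ℕ) : Fin n) = 0 := by
        apply Fin.ext; rw [hvb (m+1), hm1]; simp
      have ha1 : a ((m:Fin n) + 1) = 0 := by rw [← hcast_succ, hc1, ha0]
      have hb1 : b ((m:Fin n) + 1) = 0 := by rw [← hcast_succ, hc1, hb0]
      simp only [hγ_def, hm1, hq1, hcast_succ, ha1, hb1]
      rcases lt_trichotomy (m % n) i.val with hlt | heq | hgt
      · omega
      · rw [if_pos (by omega), if_pos (by omega), if_neg (by omega), hmi heq]
        push_cast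
        simp only [hd_def]; ring
      · rw [if_pos (by omega), if_neg (by omega), if_neg (by omega)]
        push_cast; ring
  have hmem : ∀ m : ℕ, π m ∈ EU := by
    intro m
    by_cases hc : m % n < i.val
    · have := hha ((m:Fin n), a ((m:Fin n)+1) - a (m:Fin n), (m:Fin n)+1) ⟨(m:Fin n), rfl⟩
      simp only [hπ_def, hstep m, if_pos hc, hcast_succ]
      exact this
    · have := hhb ((m:Fin n), b ((m:Fin n)+1) - b (m:Fin n), (m:Fin n)+1) ⟨(m:Fin n), rfl⟩
      simp only [hπ_def, hstep m, if_neg hc, hcast_succ]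
      exact this
  have hinf : InfPath EU π := ⟨hmem, fun m => rfl⟩
  have hγ0 : γ 0 = 0 := by
    simp only [hγ_def, Nat.zero_div, Nat.zero_mod, Nat.cast_zero, ha0]
    simp
  have hsum : ∀ ℓ : ℕ, (∑ j ∈ Finset.range ℓ, (π j).2.1) = γ ℓ := by
    intro ℓ
    have := Finset.sum_range_sub γ ℓ
    simpa [hπ_def, hγ0] using this
  have hsumR : ∀ ℓ : ℕ, (∑ j ∈ Finset.range ℓ, ((π j).2.1 : ℝ)) = ((γ ℓ : ℤ) : ℝ) := by
    intro ℓ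
    rw [← hsum ℓ]
    push_cast
    rfl
  have hγlb : ∀ ℓ : ℕ, (ℓ:ℤ) * d - N ≤ γ ℓ := by
    intro ℓ
    have hqle : ((ℓ / n : ℕ) : ℤ) ≤ (ℓ : ℤ) := by exact_mod_cast Nat.div_le_self ℓ n
    have hkey : ((ℓ:ℤ)) * d ≤ ((ℓ / n : ℕ) : ℤ) * d :=
      mul_le_mul_of_nonpos_right hqle (by omega)
    simp only [hγ_def]
    split_ifs with h
    · have := (ha ((ℓ : Fin n))).1
      have hN0 : (0:ℤ) ≤ N := Int.natCast_nonneg N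
      omega
    · have := (hb ((ℓ : Fin n))).1
      omega
  set B : ℝ := (N : ℝ) - (d : ℝ) with hB_def
  have hd0 : (d:ℝ) ≤ -1 := by exact_mod_cast hd
  have hN0 : (0:ℝ) ≤ N := Nat.cast_nonneg N
  have hlow : ∀ ℓ : ℕ, -B ≤ (∑ j ∈ Finset.range ℓ, ((π j).2.1 : ℝ)) / (ℓ : ℝ) := by
    intro ℓ
    rcases Nat.eq_zero_or_pos ℓ with h0 | h0
    · subst h0; simp [hB_def]; linarith
    · have hlp : (0:ℝ) < ℓ := by positivity
      rw [hsumR, le_div_iff₀ hlp]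
      have h1 : ((ℓ:ℤ) * d - N : ℤ) ≤ γ ℓ := hγlb ℓ
      have h1R : (ℓ:ℝ) * d - N ≤ ((γ ℓ : ℤ) : ℝ) := by exact_mod_cast h1
      have hl1 : (1:ℝ) ≤ ℓ := by exact_mod_cast h0
      nlinarith
  have hfreq : ∃ᶠ ℓ in atTop,
      (∑ j ∈ Finset.range ℓ, ((π j).2.1 : ℝ)) / (ℓ : ℝ) ≤ (d:ℝ) / n := by
    rw [Filter.frequently_atTop]
    intro m
    refine ⟨n * (m + 1), ?_, ?_⟩
    · have : m + 1 ≤ n * (m + 1) := Nat.le_mul_of_pos_left _ hn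
      omega
    · have hmod : (n * (m+1)) % n = 0 := Nat.mul_mod_right n (m+1)
      have hdiv : (n * (m+1)) / n = m + 1 := Nat.mul_div_cancel_left _ hn
      have hc0 : ((n * (m+1) : ℕ) : Fin n) = 0 := by
        apply Fin.ext; rw [hvb, hmod]; simp
      have hγval : γ (n * (m+1)) = (m+1 : ℤ) * d := by
        simp only [hγ_def, hmod, hdiv, hc0]
        rw [if_pos (Nat.zero_le _), ha0]
        push_cast; ring
      rw [hsumR, hγval]
      have hnp : (0:ℝ) < n := by exact_mod_cast hn
      have hmp : (0:ℝ) < ((n * (m+1) : ℕ) : ℝ) := by positivity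
      rw [div_le_div_iff₀ hmp hnp]
      push_cast
      ring_nf
      rfl
  have hcneg : (d:ℝ) / n < 0 := by
    apply div_neg_of_neg_of_pos (by linarith) (by exact_mod_cast hn)
  exact not_mp _ B _ hcneg hlow hfreq (hSat π hinf)

/-- Lift an assignment on `Fin (n-1)` to a potential on `Fin n` vanishing at `0`. -/
def liftA (n N : ℕ) (a : Fin (n-1) → Fin N) : Fin n → ℤ :=
  fun k => if h : k.val = 0 then 0 else
    ((a ⟨k.val - 1, by have := k.isLt; omega⟩ : ℕ) : ℤ)

lemma liftA_zero (n N : ℕ) [NeZero n] (a : Fin (n-1) → Fin N) : liftA n N a 0 = 0 := by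
  have : (0 : Fin n).val = 0 := rfl
  simp [liftA, this]

lemma liftA_bounds (n N : ℕ) (hN : 1 ≤ N) (a : Fin (n-1) → Fin N) :
    ∀ k, 0 ≤ liftA n N a k ∧ liftA n N a k < N := by
  intro k
  unfold liftA
  split_ifs with h
  · constructor
    · exact le_refl 0
    · exact_mod_cast hN
  · constructor
    · positivity
    · exact_mod_cast (a _).isLt

lemma liftA_inj (n N : ℕ) (a b : Fin (n-1) → Fin N)
    (h : liftA n N a = liftA n N b) : a = b := by
  funext j
  have hj : j.val < n - 1 := j.isLt
  have hk : (⟨j.val + 1, by omega⟩ : Fin n).val ≠ 0 := by simp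
  have := congrFun h ⟨j.val + 1, by omega⟩
  unfold liftA at this
  rw [dif_neg hk, dif_neg hk] at this
  have hval : ((a ⟨j.val + 1 - 1, by omega⟩ : ℕ) : ℤ) = ((b ⟨j.val + 1 - 1, by omega⟩ : ℕ) : ℤ) := this
  have h2 : a ⟨j.val, by omega⟩ = b ⟨j.val, by omega⟩ := by
    apply Fin.ext
    exact_mod_cast (by simpa using hval)
  simpa using h2

/-- The cycle graph as a `WGraph`. -/
def cycG (n N : ℕ) [NeZero n] (a : Fin n → ℤ) (ha : ∀ k, 0 ≤ a k ∧ a k < N) :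
    WGraph (Wball N) where
  V := Fin n
  fin := inferInstance
  E := cycE n a
  init := 0
  wt := by
    rintro e ⟨k, rfl⟩
    simp only [Wball, Finset.mem_Ioo]
    have h1 := ha k; have h2 := ha (k+1)
    constructor <;> omega
  reach := fun v => by
    obtain ⟨h1, h2⟩ := pathTo n a v.val
    exact ⟨_, h1, by rwa [Fin.cast_val_eq_self] at h2⟩


/-- for `n, N ≥ 1`, every `(n, (-N,N))`-universal graph `U`
satisfies `|U|^n ≥ N^(n-1)`; equivalently, `|U| ≥ N^(1 - 1/n)`. -/
theorem universal_lower_bound_weight (n N : ℕ) (hn : 1 ≤ n) (hN : 1 ≤ N)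
    (U : Type) [Fintype U] (EU : Set (U × ℤ × U))
    (hU : Universal n (Wball N) EU) :
    N ^ (n - 1) ≤ Fintype.card U ^ n ∧
    (N : ℝ) ^ ((1 : ℝ) - 1 / (n : ℝ)) ≤ (Fintype.card U : ℝ) := by
  haveI : NeZero n := ⟨by omega⟩
  obtain ⟨hSat, hhom⟩ := hU
  have hex : ∀ a : Fin (n-1) → Fin N, ∃ φ : Fin n → U,
      IsHom (cycE n (liftA n N a)) EU φ := by
    intro a
    obtain ⟨φ, hφ⟩ := hhom (cycG n N (liftA n N a) (liftA_bounds n N hN a))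
      (le_of_eq (Fintype.card_fin n))
      (satMP_cyc n N (liftA n N a) (liftA_bounds n N hN a))
    exact ⟨φ, hφ⟩
  choose Φ hΦ using hex
  have hinj : Function.Injective Φ := by
    intro a b hab
    apply liftA_inj n N
    by_contra hne
    have hk : ∃ k, liftA n N a k ≠ liftA n N b k := by
      by_contra h; push_neg at h; exact hne (funext h)
    obtain ⟨k, hk⟩ := hk
    have hΦb : IsHom (cycE n (liftA n N b)) EU (Φ a) := by
      rw [hab]; exact hΦ b
    rcases lt_or_gt_of_ne hk with hlt | hgt
    · exact inj_aux n N EU hSat (liftA n N a) (liftA n N b)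
        (liftA_zero n N a) (liftA_zero n N b)
        (liftA_bounds n N hN a) (liftA_bounds n N hN b)
        (Φ a) (hΦ a) hΦb k hlt
    · exact inj_aux n N EU hSat (liftA n N b) (liftA n N a)
        (liftA_zero n N b) (liftA_zero n N a)
        (liftA_bounds n N hN b) (liftA_bounds n N hN a)
        (Φ a) hΦb (hΦ a) k hgt
  have hcard : N ^ (n-1) ≤ Fintype.card U ^ n := by
    have := Fintype.card_le_of_injective Φ hinj
    simpa [Fintype.card_fun, Fintype.card_fin] using this
  refine ⟨hcard, ?_⟩
  have hN0 : (0:ℝ) ≤ N := Nat.cast_nonneg N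
  have hU0 : (0:ℝ) ≤ Fintype.card U := Nat.cast_nonneg _
  have hnR : (0:ℝ) < n := by exact_mod_cast hn
  have h1 : ((N:ℝ)) ^ (((n-1 : ℕ)):ℝ) ≤ ((Fintype.card U : ℝ)) ^ ((n:ℕ):ℝ) := by
    rw [Real.rpow_natCast, Real.rpow_natCast]
    exact_mod_cast hcard
  have h2 := Real.rpow_le_rpow (by positivity) h1 (by positivity : (0:ℝ) ≤ 1/(n:ℝ))
  rw [← Real.rpow_mul hN0, ← Real.rpow_mul hU0] at h2
  have hexp2 : ((n:ℕ):ℝ) * (1/(n:ℝ)) = 1 := by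
    field_simp
  have hexp1 : (((n-1 : ℕ)):ℝ) * (1/(n:ℝ)) = (1 : ℝ) - 1 / (n:ℝ) := by
    rw [Nat.cast_sub hn]
    field_simp
    simp
  rw [hexp1, hexp2, Real.rpow_one] at h2
  exact h2
end
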